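/- The variance of the signed-bucket estimator X_k = G_k · T(H_k) is at most (1/B) · Σ_{j∈ι, j≠k} (v j)². (This is the content of the paper's claim that the variance of the counter T[j][H_j(k)] is at most 1/B times the sum of the squared round-trip times across all flows.) -/

import Mathlib

open MeasureTheory ProbabilityTheory

/-- The variance of the signed-bucket estimator `X k = G k * T (H k)` is at most
`(1/B) * Σ_{j ≠ k} (v j)^2`. -/
theorem stmt1 {Ω : Type*} [MeasurableSpace Ω] (μ : Measure Ω) [IsProbabilityMeasure μ]
    {ι : Type*} [Fintype ι] [DecidableEq ι] (B : ℕ) (hB : 1 ≤ B) (v : ι → ℝ)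
    (G : ι → Ω → ℝ) (H : ι → Ω → Fin B)
    (hGmeas : ∀ j, Measurable (G j)) (hHmeas : ∀ j, Measurable (H j))
    (hGval : ∀ j ω, G j ω = 1 ∨ G j ω = -1)
    (hGunif : ∀ j, μ {ω | G j ω = 1} = 1 / 2)
    (hHunif : ∀ j b, μ {ω | H j ω = b} = (B : ENNReal)⁻¹)
    (hGpair : ∀ j k : ι, j ≠ k → IndepFun (G j) (G k) μ)
    (hHpair : ∀ j k : ι, j ≠ k → IndepFun (H j) (H k) μ)
    (hGH : IndepFun (fun ω j => G j ω) (fun ω j => H j ω) μ)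
    (k : ι) :
    variance (fun ω => G k ω * ∑ j, v j * G j ω * (if H j ω = H k ω then (1 : ℝ) else 0)) μ
      ≤ (B : ℝ)⁻¹ * ∑ j ∈ Finset.univ.erase k, v j ^ 2 := by
  classical
  have hBne : (B : ENNReal) ≠ 0 := by
    simp only [ne_eq, Nat.cast_eq_zero]; omega
  -- basic facts about G
  have hGabs : ∀ j ω, |G j ω| ≤ 1 := by
    intro j ω; rcases hGval j ω with h | h <;> simp [h]
  have hGsq : ∀ j ω, G j ω * G j ω = 1 := by
    intro j ω; rcases hGval j ω with h | h <;> simp [h]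
  -- integrability helper
  have hInt : ∀ (f : Ω → ℝ) (C : ℝ), Measurable f → (∀ ω, |f ω| ≤ C) → Integrable f μ := by
    intro f C hf hb
    exact memLp_one_iff_integrable.mp
      (MemLp.of_bound hf.aestronglyMeasurable C (Filter.Eventually.of_forall (by
        intro ω; simpa [Real.norm_eq_abs] using hb ω)))
  -- E[G j] = 0
  have hEG : ∀ j, ∫ ω, G j ω ∂μ = 0 := by
    intro j
    have hA : MeasurableSet {ω | G j ω = 1} := hGmeas j (measurableSet_singleton 1)
    have hrep : ∀ ω, G j ω = Set.indicator {ω' | G j ω' = 1} (fun _ => (2 : ℝ)) ω - 1 := by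
      intro ω
      rcases hGval j ω with h | h
      · simp only [Set.indicator_apply, Set.mem_setOf_eq, h, if_true]; norm_num
      · have hne : ¬ (G j ω = 1) := by rw [h]; norm_num
        simp only [Set.indicator_apply, Set.mem_setOf_eq, hne, if_false, h]
        norm_num
    rw [integral_congr_ae (Filter.Eventually.of_forall hrep),
      integral_sub ((integrable_const (2 : ℝ)).indicator hA) (integrable_const 1),
      integral_indicator_const _ hA, integral_const, measureReal_def, hGunif j]
    norm_num [probReal_univ]
  -- E[G j * G l] = 0 for j ≠ l
  have hEGmul : ∀ j l : ι, j ≠ l → ∫ ω, G j ω * G l ω ∂μ = 0 := by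
    intro j l hjl
    rw [show ∫ ω, G j ω * G l ω ∂μ = _ from (hGpair j l hjl).integral_mul_eq_mul_integral (hGmeas j).aestronglyMeasurable
      (hGmeas l).aestronglyMeasurable, hEG j, zero_mul]
  -- measurability of coordinate-equality indicators on (ι → Fin B)
  have hψmeas : ∀ a b : ι,
      Measurable (fun x : ι → Fin B => (if x a = x b then (1 : ℝ) else 0)) := by
    intro a b
    have hset : MeasurableSet {x : ι → Fin B | x a = x b} := by
      have : {x : ι → Fin B | x a = x b} = ⋃ c : Fin B,
          ((fun x : ι → Fin B => x a) ⁻¹' {c} ∩ (fun x : ι → Fin B => x b) ⁻¹' {c}) := by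
        ext x
        simp only [Set.mem_setOf_eq, Set.mem_iUnion, Set.mem_inter_iff, Set.mem_preimage,
          Set.mem_singleton_iff]
        constructor
        · intro h; exact ⟨x b, h, rfl⟩
        · rintro ⟨c, h1, h2⟩; rw [h1, h2]
      rw [this]
      exact MeasurableSet.iUnion fun c =>
        ((measurable_pi_apply a (measurableSet_singleton c)).inter
          (measurable_pi_apply b (measurableSet_singleton c)))
    exact Measurable.ite hset measurable_const measurable_const
  -- master zero lemma: E[G j * G l * ψ(H)] = 0 for j ≠ l
  have hzero : ∀ j l : ι, j ≠ l → ∀ ψ : (ι → Fin B) → ℝ, Measurable ψ →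
      ∫ ω, G j ω * G l ω * ψ (fun i => H i ω) ∂μ = 0 := by
    intro j l hjl ψ hψ
    have hφ : Measurable (fun f : ι → ℝ => f j * f l) :=
      (measurable_pi_apply j).mul (measurable_pi_apply l)
    have hind : IndepFun (fun ω => G j ω * G l ω) (fun ω => ψ (fun i => H i ω)) μ :=
      hGH.comp hφ hψ
    have h := hind.integral_mul_eq_mul_integral ((hGmeas j).mul (hGmeas l)).aestronglyMeasurable
      (hψ.comp (measurable_pi_iff.mpr hHmeas)).aestronglyMeasurable
    rw [show ∫ ω, G j ω * G l ω * ψ (fun i => H i ω) ∂μ = _ from h, hEGmul j l hjl, zero_mul]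
  -- measurability of the indicators as functions on Ω
  have hmeasInd : ∀ j, Measurable (fun ω => (if H j ω = H k ω then (1 : ℝ) else 0)) := by
    intro j
    exact (hψmeas j k).comp (measurable_pi_iff.mpr hHmeas)
  have hIndAbs : ∀ j ω, |(if H j ω = H k ω then (1 : ℝ) else 0)| ≤ 1 := by
    intro j ω; split_ifs <;> norm_num
  -- E[1[H j = H k]] = 1/B for j ≠ k
  have hEind : ∀ j, j ≠ k → ∫ ω, (if H j ω = H k ω then (1 : ℝ) else 0) ∂μ = (B : ℝ)⁻¹ := by
    intro j hjk
    have hU : {ω | H j ω = H k ω} = ⋃ b : Fin B, (H j ⁻¹' {b} ∩ H k ⁻¹' {b}) := by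
      ext ω
      simp only [Set.mem_setOf_eq, Set.mem_iUnion, Set.mem_inter_iff, Set.mem_preimage,
        Set.mem_singleton_iff]
      constructor
      · intro h; exact ⟨H k ω, h, rfl⟩
      · rintro ⟨b, h1, h2⟩; rw [h1, h2]
    have hSmeas : MeasurableSet {ω | H j ω = H k ω} := by
      rw [hU]
      exact MeasurableSet.iUnion fun b =>
        ((hHmeas j (measurableSet_singleton b)).inter (hHmeas k (measurableSet_singleton b)))
    have hμS : μ {ω | H j ω = H k ω} = (B : ENNReal)⁻¹ := by
      rw [hU, measure_iUnion ?_ (fun b =>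
        ((hHmeas j (measurableSet_singleton b)).inter (hHmeas k (measurableSet_singleton b))))]
      · have hterm : ∀ b : Fin B, μ (H j ⁻¹' {b} ∩ H k ⁻¹' {b})
            = (B : ENNReal)⁻¹ * (B : ENNReal)⁻¹ := by
          intro b
          rw [(hHpair j k hjk).measure_inter_preimage_eq_mul _ _ (measurableSet_singleton b)
            (measurableSet_singleton b)]
          have h1 : μ (H j ⁻¹' {b}) = (B : ENNReal)⁻¹ := hHunif j b
          have h2 : μ (H k ⁻¹' {b}) = (B : ENNReal)⁻¹ := hHunif k b
          rw [h1, h2]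
        simp only [hterm]
        rw [tsum_fintype]
        simp only [Finset.sum_const, Finset.card_univ, Fintype.card_fin, nsmul_eq_mul]
        rw [← mul_assoc, ENNReal.mul_inv_cancel hBne (by simp), one_mul]
      · intro b c hbc
        rw [Function.onFun]
        apply Set.disjoint_left.mpr
        rintro ω ⟨h1, _⟩ ⟨h2, _⟩
        simp only [Set.mem_preimage, Set.mem_singleton_iff] at h1 h2
        exact hbc (h1.symm.trans h2)
    have heq : ∀ ω, (if H j ω = H k ω then (1 : ℝ) else 0)
        = Set.indicator {ω' | H j ω' = H k ω'} (fun _ => (1 : ℝ)) ω := by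
      intro ω; simp [Set.indicator_apply, Set.mem_setOf_eq]
    rw [integral_congr_ae (Filter.Eventually.of_forall heq), integral_indicator_const _ hSmeas,
      measureReal_def, hμS]
    simp
  -- integrability of the summand terms
  have hIntTerm : ∀ (c : ℝ) (j l : ι), Integrable
      (fun ω => c * (G j ω * G l ω * ((if H j ω = H k ω then (1 : ℝ) else 0)
        * (if H l ω = H k ω then (1 : ℝ) else 0)))) μ := by
    intro c j l
    apply hInt _ |c|
    · exact measurable_const.mul (((hGmeas j).mul (hGmeas l)).mul
        ((hmeasInd j).mul (hmeasInd l)))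
    · intro ω
      rw [abs_mul]
      have ha : |G j ω * G l ω| ≤ 1 := by
        rw [abs_mul]; exact mul_le_one₀ (hGabs j ω) (abs_nonneg _) (hGabs l ω)
      have hb : |(if H j ω = H k ω then (1:ℝ) else 0)
          * (if H l ω = H k ω then (1:ℝ) else 0)| ≤ 1 := by
        rw [abs_mul]; exact mul_le_one₀ (hIndAbs j ω) (abs_nonneg _) (hIndAbs l ω)
      have h1 : |G j ω * G l ω * ((if H j ω = H k ω then (1:ℝ) else 0)
          * (if H l ω = H k ω then (1:ℝ) else 0))| ≤ 1 := by
        rw [abs_mul]; exact mul_le_one₀ ha (abs_nonneg _) hb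
      calc |c| * |G j ω * G l ω * ((if H j ω = H k ω then (1:ℝ) else 0)
          * (if H l ω = H k ω then (1:ℝ) else 0))| ≤ |c| * 1 :=
            mul_le_mul_of_nonneg_left h1 (abs_nonneg c)
        _ = |c| := mul_one _
  -- E[X] = v k
  have hEX : ∫ ω, G k ω * ∑ j, v j * G j ω * (if H j ω = H k ω then (1 : ℝ) else 0) ∂μ
      = v k := by
    have hrw : ∀ ω, G k ω * ∑ j, v j * G j ω * (if H j ω = H k ω then (1 : ℝ) else 0)
        = ∑ j, v j * (G k ω * G j ω * ((if H k ω = H k ω then (1:ℝ) else 0)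
            * (if H j ω = H k ω then (1 : ℝ) else 0))) := by
      intro ω
      rw [Finset.mul_sum]
      refine Finset.sum_congr rfl fun j _ => ?_
      have h1 : (if H k ω = H k ω then (1:ℝ) else 0) = 1 := if_pos rfl
      rw [h1]
      ring
    rw [integral_congr_ae (Filter.Eventually.of_forall hrw),
      integral_finset_sum _ (fun j _ => hIntTerm (v j) k j)]
    rw [Finset.sum_eq_single k]
    · have hpt : ∀ ω, v k * (G k ω * G k ω * ((if H k ω = H k ω then (1:ℝ) else 0)
          * (if H k ω = H k ω then (1:ℝ) else 0))) = v k := by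
        intro ω
        have h1 : (if H k ω = H k ω then (1:ℝ) else 0) = 1 := if_pos rfl
        rw [h1, hGsq k ω]
        ring
      rw [integral_congr_ae (Filter.Eventually.of_forall hpt), integral_const]
      simp
    · intro j _ hjk
      have : ∫ ω, G k ω * G j ω * ((if H k ω = H k ω then (1:ℝ) else 0)
          * (if H j ω = H k ω then (1:ℝ) else 0)) ∂μ = 0 := by
        exact hzero k j (Ne.symm hjk)
          (fun x => (if x k = x k then (1:ℝ) else 0) * (if x j = x k then (1:ℝ) else 0))
          ((hψmeas k k).mul (hψmeas j k))
      rw [integral_const_mul, this, mul_zero]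
    · intro h; exact absurd (Finset.mem_univ k) h
  -- E[X^2] = v k ^ 2 + (1/B) * Σ_{j ≠ k} v j ^ 2
  have hEX2 : ∫ ω, (G k ω * ∑ j, v j * G j ω * (if H j ω = H k ω then (1 : ℝ) else 0)) ^ 2 ∂μ
      = v k ^ 2 + (B : ℝ)⁻¹ * ∑ j ∈ Finset.univ.erase k, v j ^ 2 := by
    have hrw : ∀ ω, (G k ω * ∑ j, v j * G j ω * (if H j ω = H k ω then (1 : ℝ) else 0)) ^ 2
        = ∑ j, ∑ l, (v j * v l) * (G j ω * G l ω * ((if H j ω = H k ω then (1:ℝ) else 0)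
            * (if H l ω = H k ω then (1:ℝ) else 0))) := by
      intro ω
      have h1 : (G k ω * ∑ j, v j * G j ω * (if H j ω = H k ω then (1 : ℝ) else 0)) ^ 2
          = (G k ω * G k ω) * ((∑ j, v j * G j ω * (if H j ω = H k ω then (1 : ℝ) else 0))
            * (∑ j, v j * G j ω * (if H j ω = H k ω then (1 : ℝ) else 0))) := by ring
      rw [h1, hGsq k ω, one_mul, Finset.sum_mul_sum]
      refine Finset.sum_congr rfl fun j _ => Finset.sum_congr rfl fun l _ => by ring
    rw [integral_congr_ae (Filter.Eventually.of_forall hrw),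
      integral_finset_sum _ (fun j _ =>
        integrable_finset_sum _ (fun l _ => hIntTerm (v j * v l) j l))]
    have hinner : ∀ j : ι, ∫ ω, ∑ l, (v j * v l)
        * (G j ω * G l ω * ((if H j ω = H k ω then (1:ℝ) else 0)
            * (if H l ω = H k ω then (1:ℝ) else 0))) ∂μ
        = v j ^ 2 * (if j = k then 1 else (B : ℝ)⁻¹) := by
      intro j
      rw [integral_finset_sum _ (fun l _ => hIntTerm (v j * v l) j l)]
      rw [Finset.sum_eq_single j]
      · have hpt : ∀ ω, (v j * v j) * (G j ω * G j ω * ((if H j ω = H k ω then (1:ℝ) else 0)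
            * (if H j ω = H k ω then (1:ℝ) else 0)))
            = v j ^ 2 * (if H j ω = H k ω then (1:ℝ) else 0) := by
          intro ω
          rw [hGsq j ω]
          by_cases h : H j ω = H k ω <;> simp [h] <;> ring
        rw [integral_congr_ae (Filter.Eventually.of_forall hpt), integral_const_mul]
        by_cases hjk : j = k
        · subst hjk
          have : ∀ ω : Ω, (if H j ω = H j ω then (1:ℝ) else 0) = 1 := fun ω => if_pos rfl
          rw [integral_congr_ae (Filter.Eventually.of_forall this), integral_const]
          simp
        · rw [hEind j hjk]
          simp [hjk]
      · intro l _ hlj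
        have : ∫ ω, G j ω * G l ω * ((if H j ω = H k ω then (1:ℝ) else 0)
            * (if H l ω = H k ω then (1:ℝ) else 0)) ∂μ = 0 := by
          exact hzero j l (Ne.symm hlj)
            (fun x => (if x j = x k then (1:ℝ) else 0) * (if x l = x k then (1:ℝ) else 0))
            ((hψmeas j k).mul (hψmeas l k))
        rw [integral_const_mul, this, mul_zero]
      · intro h; exact absurd (Finset.mem_univ j) h
    rw [Finset.sum_congr rfl (fun j _ => hinner j)]
    rw [← Finset.add_sum_erase _ _ (Finset.mem_univ k)]
    rw [if_pos rfl, mul_one]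
    congr 1
    rw [Finset.mul_sum]
    refine Finset.sum_congr rfl fun j hj => ?_
    rw [if_neg (Finset.ne_of_mem_erase hj)]
    ring
  -- membership in L^2
  have hXmeas : Measurable (fun ω => G k ω
      * ∑ j, v j * G j ω * (if H j ω = H k ω then (1 : ℝ) else 0)) := by
    exact (hGmeas k).mul (Finset.measurable_sum _ fun j _ =>
      (measurable_const.mul (hGmeas j)).mul (hmeasInd j))
  have hXbd : ∀ ω, ‖G k ω * ∑ j, v j * G j ω * (if H j ω = H k ω then (1 : ℝ) else 0)‖
      ≤ ∑ j, |v j| := by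
    intro ω
    rw [Real.norm_eq_abs, abs_mul]
    have h1 : |∑ j, v j * G j ω * (if H j ω = H k ω then (1 : ℝ) else 0)| ≤ ∑ j, |v j| := by
      refine (Finset.abs_sum_le_sum_abs _ _).trans (Finset.sum_le_sum fun j _ => ?_)
      rw [abs_mul, abs_mul]
      calc |v j| * |G j ω| * |(if H j ω = H k ω then (1:ℝ) else 0)|
          ≤ |v j| * 1 * 1 := by
            gcongr <;> first | exact hGabs j ω | exact hIndAbs j ω
        _ = |v j| := by ring
    have h4 := hGabs k ω
    have h5 : (0:ℝ) ≤ |∑ j, v j * G j ω * (if H j ω = H k ω then (1 : ℝ) else 0)| :=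
      abs_nonneg _
    nlinarith
  have hMem : MemLp (fun ω => G k ω
      * ∑ j, v j * G j ω * (if H j ω = H k ω then (1 : ℝ) else 0)) 2 μ :=
    MemLp.of_bound hXmeas.aestronglyMeasurable _ (Filter.Eventually.of_forall hXbd)
  -- conclusion
  rw [variance_eq_sub hMem]
  have hpow : (∫ ω, ((fun ω => G k ω
      * ∑ j, v j * G j ω * (if H j ω = H k ω then (1 : ℝ) else 0)) ^ 2) ω ∂μ)
      = ∫ ω, (G k ω * ∑ j, v j * G j ω * (if H j ω = H k ω then (1 : ℝ) else 0)) ^ 2 ∂μ := rfl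
  rw [hpow, hEX2, hEX]
  linarith
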